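/- The r-scaling entropy functional H_r(ν) = −∫ log ν(B(x,r)) dν(x) on the space M of Borel probability measures on a compact ball B ⊂ ℝ^d, equipped with the weak-* topology, is lower semicontinuous: it is the supremum (limit of an increasing sequence) of continuous functionals of the form ν ↦ ∫ min{k, log(1/∫ f_k(x−y) dν(y))} dν(x), where f_k is a decreasing sequence of continuous functions converging pointwise to the indicator of B(0,r). -/

import Mathlib

open MeasureTheory Metric Filter Topology
open scoped ENNReal NNReal BoundedContinuousFunction

set_option linter.unusedSectionVars false
set_option linter.unusedVariables false

noncomputable section SE

variable {X : Type*} [MetricSpace X] [CompactSpace X] [MeasurableSpace X] [BorelSpace X]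

/-- auxiliary continuous approximation of the indicator of `closedBall · r`. -/
def sePhi (r : ℝ) (n : ℕ) (t : ℝ) : ℝ := max 0 (min 1 (1 - (n + 1) * (t - r)))

lemma sePhi_nonneg (r : ℝ) (n : ℕ) (t : ℝ) : 0 ≤ sePhi r n t := le_max_left _ _

lemma sePhi_le_one (r : ℝ) (n : ℕ) (t : ℝ) : sePhi r n t ≤ 1 :=
  max_le zero_le_one (min_le_left _ _)

lemma sePhi_of_le {r t : ℝ} (n : ℕ) (h : t ≤ r) : sePhi r n t = 1 := by
  have h1 : (1 : ℝ) ≤ 1 - (n + 1) * (t - r) := by nlinarith [sub_nonpos.2 h]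
  simp [sePhi, min_eq_left, h1, max_eq_right, zero_le_one]

lemma sePhi_of_ge {r t : ℝ} {n : ℕ} (h : 1 - (n + 1) * (t - r) ≤ 0) : sePhi r n t = 0 := by
  have : min 1 (1 - (n + 1) * (t - r)) = 1 - (n + 1) * (t - r) :=
    min_eq_right (h.trans zero_le_one)
  simp [sePhi, this, max_eq_left, h]

lemma sePhi_anti {r t : ℝ} {m n : ℕ} (h : m ≤ n) : sePhi r n t ≤ sePhi r m t := by
  rcases le_or_gt t r with ht | ht
  · rw [sePhi_of_le n ht, sePhi_of_le m ht]
  · have : 1 - ((n : ℝ) + 1) * (t - r) ≤ 1 - ((m : ℝ) + 1) * (t - r) := by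
      have : (m : ℝ) ≤ n := Nat.cast_le.2 h
      nlinarith
    exact max_le_max le_rfl (min_le_min le_rfl this)

lemma sePhi_continuous (r : ℝ) (n : ℕ) : Continuous (sePhi r n) := by
  unfold sePhi; fun_prop

lemma sePhi_dist_le (r : ℝ) (n : ℕ) (s t : ℝ) :
    |sePhi r n t - sePhi r n s| ≤ (n + 1) * |t - s| := by
  have h1 : |sePhi r n t - sePhi r n s| ≤
      |min 1 (1 - (n + 1) * (t - r)) - min 1 (1 - (n + 1) * (s - r))| := by
    simpa [sePhi, max_comm] using
      abs_max_sub_max_le_abs (min 1 (1 - (n + 1) * (t - r)))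
        (min 1 (1 - (n + 1) * (s - r))) 0
  have h2 : |min 1 (1 - (n + 1) * (t - r)) - min 1 (1 - (n + 1) * (s - r))| ≤
      |(1 - (n + 1) * (t - r)) - (1 - (n + 1) * (s - r))| := by
    simpa using abs_min_sub_min_le_max (1:ℝ) (1 - ((n : ℝ) + 1) * (t - r)) 1
      (1 - (n + 1) * (s - r))
  have h3 : |(1 - ((n : ℝ) + 1) * (t - r)) - (1 - (n + 1) * (s - r))| = (n + 1) * |t - s| := by
    rw [show (1 - ((n : ℝ) + 1) * (t - r)) - (1 - (n + 1) * (s - r))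
        = -(((n : ℝ) + 1) * (t - s)) by ring, abs_neg, abs_mul, abs_of_nonneg (by positivity)]
  exact h1.trans (h2.trans h3.le)


/-- continuous integrand as a bounded continuous function of `y`. -/
def sePhiB (r : ℝ) (n : ℕ) (x : X) : X →ᵇ ℝ :=
  BoundedContinuousFunction.mkOfCompact
    ⟨fun y => sePhi r n (dist x y), (sePhi_continuous r n).comp (continuous_const.dist continuous_id)⟩

@[simp] lemma sePhiB_apply (r : ℝ) (n : ℕ) (x y : X) :
    sePhiB r n x y = sePhi r n (dist x y) := rfl

/-- `ψ_n(ν, x) = ∫ φ_n(dist x y) dν(y)`. -/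
def sePsi (r : ℝ) (n : ℕ) (ν : ProbabilityMeasure X) (x : X) : ℝ :=
  ∫ y, sePhi r n (dist x y) ∂(ν : Measure X)

lemma sePsi_eq (r : ℝ) (n : ℕ) (ν : ProbabilityMeasure X) (x : X) :
    sePsi r n ν x = ∫ y, sePhiB r n x y ∂(ν : Measure X) := rfl

lemma sePsi_integrable (r : ℝ) (n : ℕ) (ν : ProbabilityMeasure X) (x : X) :
    Integrable (fun y => sePhi r n (dist x y)) (ν : Measure X) :=
  (sePhiB r n x).integrable _

lemma sePsi_nonneg (r : ℝ) (n : ℕ) (ν : ProbabilityMeasure X) (x : X) : 0 ≤ sePsi r n ν x :=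
  integral_nonneg fun y => sePhi_nonneg r n _

lemma sePsi_le_one (r : ℝ) (n : ℕ) (ν : ProbabilityMeasure X) (x : X) : sePsi r n ν x ≤ 1 := by
  have := integral_mono (sePsi_integrable r n ν x) (integrable_const (1 : ℝ))
    (fun y => sePhi_le_one r n (dist x y))
  simpa [sePsi] using this

lemma sePsi_anti {m n : ℕ} (h : m ≤ n) (r : ℝ) (ν : ProbabilityMeasure X) (x : X) :
    sePsi r n ν x ≤ sePsi r m ν x :=
  integral_mono (sePsi_integrable r n ν x) (sePsi_integrable r m ν x)
    (fun y => sePhi_anti h)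

lemma measure_closedBall_le_sePsi (r : ℝ) (n : ℕ) (ν : ProbabilityMeasure X) (x : X) :
    ((ν : Measure X) (closedBall x r)).toReal ≤ sePsi r n ν x := by
  have hind : Integrable ((closedBall x r).indicator fun _ => (1 : ℝ)) (ν : Measure X) :=
    (integrable_const (1 : ℝ)).indicator measurableSet_closedBall
  have hmono : ∀ y, (closedBall x r).indicator (fun _ => (1 : ℝ)) y ≤ sePhi r n (dist x y) := by
    intro y
    by_cases hy : y ∈ closedBall x r
    · rw [Set.indicator_of_mem hy]
      rw [mem_closedBall, dist_comm] at hy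
      exact (sePhi_of_le n hy).ge
    · rw [Set.indicator_of_notMem hy]; exact sePhi_nonneg r n _
  have := integral_mono hind (sePsi_integrable r n ν x) hmono
  simp [integral_indicator_const (1 : ℝ) measurableSet_closedBall] at this; exact this

lemma sePsi_dist_le (r : ℝ) (n : ℕ) (ν : ProbabilityMeasure X) (x x' : X) :
    |sePsi r n ν x - sePsi r n ν x'| ≤ (n + 1) * dist x x' := by
  rw [sePsi, sePsi, ← integral_sub (sePsi_integrable r n ν x) (sePsi_integrable r n ν x')]
  have : ∀ y, ‖sePhi r n (dist x y) - sePhi r n (dist x' y)‖ ≤ (n + 1) * dist x x' := by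
    intro y
    rw [Real.norm_eq_abs]
    refine (sePhi_dist_le r n (dist x' y) (dist x y)).trans ?_
    have := abs_dist_sub_le x x' y
    nlinarith [abs_nonneg (dist x y - dist x' y)]
  have h := norm_integral_le_of_norm_le_const (μ := (ν : Measure X))
    (f := fun y => sePhi r n (dist x y) - sePhi r n (dist x' y))
    (C := (n + 1) * dist x x') (Eventually.of_forall this)
  simpa [Real.norm_eq_abs] using h

lemma sePsi_tendsto (r : ℝ) (ν : ProbabilityMeasure X) (x : X) :
    Tendsto (fun n => sePsi r n ν x) atTop
      (𝓝 (((ν : Measure X) (closedBall x r)).toReal)) := by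
  have key : Tendsto (fun n => sePsi r n ν x) atTop
      (𝓝 (∫ y, (closedBall x r).indicator (fun _ => (1 : ℝ)) y ∂(ν : Measure X))) := by
    refine tendsto_integral_of_dominated_convergence (fun _ => (1 : ℝ))
      (fun n => (sePsi_integrable r n ν x).aestronglyMeasurable) (integrable_const 1)
      (fun n => Eventually.of_forall fun y => ?_) (Eventually.of_forall fun y => ?_)
    · rw [Real.norm_eq_abs, abs_of_nonneg (sePhi_nonneg r n _)]
      exact sePhi_le_one r n _
    · by_cases hy : y ∈ closedBall x r
      · rw [Set.indicator_of_mem hy]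
        rw [mem_closedBall, dist_comm] at hy
        exact tendsto_const_nhds.congr fun n => (sePhi_of_le n hy).symm
      · rw [Set.indicator_of_notMem hy]
        rw [mem_closedBall, dist_comm, not_le] at hy
        obtain ⟨N, hN⟩ := exists_nat_ge (1 / (dist x y - r))
        refine tendsto_const_nhds.congr' ?_
        filter_upwards [eventually_ge_atTop N] with n hn
        refine (sePhi_of_ge ?_).symm
        have hpos : 0 < dist x y - r := sub_pos.2 hy
        have h1 : 1 / (dist x y - r) ≤ (n : ℝ) := hN.trans (Nat.cast_le.2 hn)
        have : 1 ≤ (n : ℝ) * (dist x y - r) := by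
          rwa [div_le_iff₀ hpos] at h1
        nlinarith
  simp [integral_indicator_const (1 : ℝ) measurableSet_closedBall] at key; exact key

lemma sePsi_continuous_nu (r : ℝ) (n : ℕ) (x : X) :
    Continuous fun ν : ProbabilityMeasure X => sePsi r n ν x := by
  rw [continuous_iff_continuousAt]
  intro ν₀
  exact (ProbabilityMeasure.tendsto_iff_forall_integral_tendsto.mp
    (tendsto_id (x := 𝓝 ν₀))) (sePhiB r n x)


/-- log-Lipschitz estimate. -/
lemma log_dist_le {a b c : ℝ} (hc : 0 < c) (ha : c ≤ a) (hb : c ≤ b) :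
    |Real.log a - Real.log b| ≤ (1 / c) * |a - b| := by
  have key : ∀ u v : ℝ, c ≤ u → c ≤ v → Real.log u - Real.log v ≤ (1 / c) * |u - v| := by
    intro u v hu hv
    have hupos : 0 < u := hc.trans_le hu
    have hvpos : 0 < v := hc.trans_le hv
    have h1 : Real.log u - Real.log v = Real.log (u / v) := by
      rw [Real.log_div hupos.ne' hvpos.ne']
    rw [h1]
    refine (Real.log_le_sub_one_of_pos (div_pos hupos hvpos)).trans ?_
    have h2 : u / v - 1 = (u - v) / v := by field_simp
    rw [h2]
    rcases le_or_gt u v with h | h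
    · have h0 : (u - v) / v ≤ 0 := div_nonpos_of_nonpos_of_nonneg (sub_nonpos.2 h) hvpos.le
      exact h0.trans (by positivity)
    · have h3 : (u - v) / v ≤ (u - v) / c :=
        div_le_div_of_nonneg_left (sub_nonneg.2 h.le) hc hv
      refine h3.trans ?_
      rw [div_eq_mul_inv, one_div, mul_comm]
      gcongr
      exact le_abs_self _
  rcases le_or_gt (Real.log a) (Real.log b) with h | h
  · rw [abs_of_nonpos (sub_nonpos.2 h), neg_sub]
    simpa [abs_sub_comm] using key b a hb ha
  · rw [abs_of_nonneg (sub_nonneg.2 h.le)]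
    exact key a b ha hb

/-- truncated negative logarithm of `ψ_n`. -/
def seU (r : ℝ) (n : ℕ) (ν : ProbabilityMeasure X) (x : X) : ℝ :=
  -Real.log (max (sePsi r n ν x) (Real.exp (-(n : ℝ))))

lemma seU_nonneg (r : ℝ) (n : ℕ) (ν : ProbabilityMeasure X) (x : X) : 0 ≤ seU r n ν x := by
  have h1 : max (sePsi r n ν x) (Real.exp (-(n : ℝ))) ≤ 1 :=
    max_le (sePsi_le_one r n ν x) (Real.exp_le_one_iff.2 (by simp))
  have := Real.log_nonpos (le_max_of_le_right (Real.exp_pos _).le) h1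
  simpa [seU] using neg_nonneg.2 this

lemma seU_le (r : ℝ) (n : ℕ) (ν : ProbabilityMeasure X) (x : X) : seU r n ν x ≤ n := by
  have h1 : Real.exp (-(n : ℝ)) ≤ max (sePsi r n ν x) (Real.exp (-(n : ℝ))) := le_max_right _ _
  have := Real.log_le_log (Real.exp_pos _) h1
  rw [Real.log_exp] at this
  simpa [seU] using neg_le.2 (by linarith)

lemma seU_mono {m n : ℕ} (h : m ≤ n) (r : ℝ) (ν : ProbabilityMeasure X) (x : X) :
    seU r m ν x ≤ seU r n ν x := by
  have hmax : max (sePsi r n ν x) (Real.exp (-(n : ℝ)))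
      ≤ max (sePsi r m ν x) (Real.exp (-(m : ℝ))) :=
    max_le_max (sePsi_anti h r ν x) (Real.exp_le_exp.2 (by simp [Nat.cast_le.2 h]))
  have := Real.log_le_log (lt_max_of_lt_right (Real.exp_pos _)) hmax
  simpa [seU] using neg_le_neg this

lemma seU_dist_le (r : ℝ) (n : ℕ) (ν : ProbabilityMeasure X) (x x' : X) :
    dist (seU r n ν x) (seU r n ν x') ≤ Real.exp n * ((n + 1) * dist x x') := by
  rw [Real.dist_eq, seU, seU, neg_sub_neg, abs_sub_comm]
  have h1 := log_dist_le (c := Real.exp (-(n : ℝ))) (Real.exp_pos _)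
    (le_max_right (sePsi r n ν x) _) (le_max_right (sePsi r n ν x') _)
  refine h1.trans ?_
  rw [one_div, ← Real.exp_neg, neg_neg]
  have h2 : |max (sePsi r n ν x) (Real.exp (-(n : ℝ)))
      - max (sePsi r n ν x') (Real.exp (-(n : ℝ)))| ≤ |sePsi r n ν x - sePsi r n ν x'| :=
    abs_max_sub_max_le_abs _ _ _
  have h3 := (h2.trans (sePsi_dist_le r n ν x x'))
  have := Real.exp_pos (n : ℝ)
  nlinarith [abs_nonneg (max (sePsi r n ν x) (Real.exp (-(n : ℝ)))
      - max (sePsi r n ν x') (Real.exp (-(n : ℝ))))]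

lemma seU_continuous_x (r : ℝ) (n : ℕ) (ν : ProbabilityMeasure X) :
    Continuous (seU r n ν) := by
  have : LipschitzWith (Real.toNNReal (Real.exp n * (n + 1))) (seU r n ν) := by
    refine LipschitzWith.of_dist_le_mul fun x x' => ?_
    refine (seU_dist_le r n ν x x').trans ?_
    rw [Real.coe_toNNReal _ (by positivity)]
    ring_nf; exact le_rfl
  exact this.continuous

lemma seU_continuous_nu (r : ℝ) (n : ℕ) (x : X) :
    Continuous fun ν : ProbabilityMeasure X => seU r n ν x := by
  have hmax : Continuous fun ν : ProbabilityMeasure X =>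
      max (sePsi r n ν x) (Real.exp (-(n : ℝ))) :=
    (sePsi_continuous_nu r n x).max continuous_const
  refine continuous_iff_continuousAt.2 fun ν₀ => ?_
  have h2 : ContinuousAt Real.log (max (sePsi r n ν₀ x) (Real.exp (-(n : ℝ)))) :=
    Real.continuousAt_log (by positivity)
  unfold seU ContinuousAt
  exact (h2.tendsto.comp hmax.continuousAt).neg


/-- `seU` as a bounded continuous function of `x`. -/
def seUB (r : ℝ) (n : ℕ) (ν : ProbabilityMeasure X) : X →ᵇ ℝ :=
  BoundedContinuousFunction.mkOfCompact ⟨seU r n ν, seU_continuous_x r n ν⟩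

@[simp] lemma seUB_apply (r : ℝ) (n : ℕ) (ν : ProbabilityMeasure X) (x : X) :
    seUB r n ν x = seU r n ν x := rfl

/-- the approximating entropy functional. -/
def seF (r : ℝ) (n : ℕ) (ν : ProbabilityMeasure X) : ℝ :=
  ∫ x, seU r n ν x ∂(ν : Measure X)

lemma seU_equicontinuous (r : ℝ) (n : ℕ) :
    Equicontinuous (fun ν : ProbabilityMeasure X => seU r n ν) := by
  refine Metric.equicontinuous_of_continuity_modulus (fun t => Real.exp n * ((n + 1) * t))
    ?_ _ (fun x y ν => seU_dist_le r n ν x y)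
  have hc : Continuous fun t : ℝ => Real.exp n * ((n + 1) * t) := by fun_prop
  simpa using hc.tendsto 0

lemma seU_tendstoUniformly (r : ℝ) (n : ℕ) (ν₀ : ProbabilityMeasure X) :
    TendstoUniformly (fun ν : ProbabilityMeasure X => seU r n ν) (seU r n ν₀) (𝓝 ν₀) := by
  have hpt : Tendsto (fun ν : ProbabilityMeasure X => seU r n ν) (𝓝 ν₀) (𝓝 (seU r n ν₀)) :=
    tendsto_pi_nhds.2 fun x => (seU_continuous_nu r n x).continuousAt
  have := ((seU_equicontinuous r n).tendsto_uniformFun_iff_pi (𝓝 ν₀) (seU r n ν₀)).2 hpt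
  exact UniformFun.tendsto_iff_tendstoUniformly.1 this

lemma seF_continuous (r : ℝ) (n : ℕ) : Continuous (seF r n (X := X)) := by
  rw [continuous_iff_continuousAt]
  intro ν₀
  rw [ContinuousAt, Metric.tendsto_nhds]
  intro ε hε
  have hA : Tendsto (fun ν : ProbabilityMeasure X => ∫ x, seU r n ν₀ x ∂(ν : Measure X))
      (𝓝 ν₀) (𝓝 (seF r n ν₀)) :=
    (ProbabilityMeasure.tendsto_iff_forall_integral_tendsto.mp
      (tendsto_id (x := 𝓝 ν₀))) (seUB r n ν₀)
  have h1 : ∀ᶠ ν : ProbabilityMeasure X in 𝓝 ν₀,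
      dist (∫ x, seU r n ν₀ x ∂(ν : Measure X)) (seF r n ν₀) < ε / 2 :=
    (Metric.tendsto_nhds.1 hA) _ (by linarith)
  have h2 : ∀ᶠ ν : ProbabilityMeasure X in 𝓝 ν₀,
      ∀ x, dist (seU r n ν₀ x) (seU r n ν x) < ε / 4 :=
    Metric.tendstoUniformly_iff.1 (seU_tendstoUniformly r n ν₀) (ε / 4) (by linarith)
  filter_upwards [h1, h2] with ν hν1 hν2
  have hint : ∀ μ : ProbabilityMeasure X, Integrable (seU r n μ) (ν : Measure X) :=
    fun μ => (seUB r n μ).integrable _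
  have hdiff : |seF r n ν - ∫ x, seU r n ν₀ x ∂(ν : Measure X)| ≤ ε / 4 := by
    rw [seF, ← integral_sub (hint ν) (hint ν₀)]
    have hb : ∀ x, ‖seU r n ν x - seU r n ν₀ x‖ ≤ ε / 4 := by
      intro x
      rw [Real.norm_eq_abs, ← Real.dist_eq, dist_comm]
      exact (hν2 x).le
    have := norm_integral_le_of_norm_le_const (μ := (ν : Measure X))
      (f := fun x => seU r n ν x - seU r n ν₀ x) (C := ε / 4) (Eventually.of_forall hb)
    simpa [Real.norm_eq_abs] using this
  have := abs_sub_abs_le_abs_sub (seF r n ν) (seF r n ν₀)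
  calc dist (seF r n ν) (seF r n ν₀)
      ≤ dist (seF r n ν) (∫ x, seU r n ν₀ x ∂(ν : Measure X))
        + dist (∫ x, seU r n ν₀ x ∂(ν : Measure X)) (seF r n ν₀) := dist_triangle _ _ _
    _ < ε := by
        rw [Real.dist_eq]
        have : |seF r n ν - ∫ x, seU r n ν₀ x ∂(ν : Measure X)| ≤ ε / 4 := hdiff
        linarith


lemma se_ae_pos (r : ℝ) (hr : 0 < r) (ν : ProbabilityMeasure X) :
    ∀ᵐ x ∂(ν : Measure X), (ν : Measure X) (closedBall x r) ≠ 0 := by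
  obtain ⟨t, -, tfin, hcov⟩ :=
    finite_cover_balls_of_compact (isCompact_univ (X := X)) (half_pos hr)
  set μ := (ν : Measure X) with hμ
  rw [ae_iff]
  refine measure_mono_null (t := ⋃ c ∈ {c ∈ t | μ (ball c (r / 2)) = 0}, ball c (r / 2))
    ?_ ?_
  · intro x hx
    have hx' : μ (closedBall x r) = 0 := by simpa using hx
    obtain ⟨c, hct, hxc⟩ : ∃ c ∈ t, x ∈ ball c (r / 2) := by
      simpa using hcov (Set.mem_univ x)
    have hsub : ball c (r / 2) ⊆ closedBall x r := by
      intro y hy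
      rw [mem_ball] at hy hxc
      rw [mem_closedBall]
      have := dist_triangle y c x
      have hcx : dist c x < r / 2 := by rwa [dist_comm] at hxc
      linarith
    have hc0 : μ (ball c (r / 2)) = 0 :=
      le_antisymm (le_trans (measure_mono hsub) hx'.le) zero_le
    exact Set.mem_biUnion ⟨hct, hc0⟩ hxc
  · exact (measure_biUnion_null_iff ((tfin.subset (Set.sep_subset _ _)).countable)).2
      fun c hc => hc.2

end SE

/-- The `r`-scaling entropy `H_r(ν) = −∫ log ν(B(x,r)) dν(x)`, as a `[0,∞]`-valued
functional on the space of Borel probability measures on a compact metric space (e.g. a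
compact ball in `ℝ^d`) with the weak-* topology, is lower semicontinuous. -/
theorem scaling_entropy_lowerSemicontinuous
    {X : Type*} [MetricSpace X] [CompactSpace X]
    [MeasurableSpace X] [BorelSpace X]
    (r : ℝ) (hr : 0 < r) :
    LowerSemicontinuous (fun ν : ProbabilityMeasure X =>
      ∫⁻ x, ENNReal.ofReal (-Real.log ((ν (Metric.closedBall x r) : NNReal) : ℝ))
        ∂(ν : Measure X)) := by
  have key : (fun ν : ProbabilityMeasure X =>
      ∫⁻ x, ENNReal.ofReal (-Real.log ((ν (Metric.closedBall x r) : NNReal) : ℝ))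
        ∂(ν : Measure X)) = fun ν => ⨆ n : ℕ, ENNReal.ofReal (seF r n ν) := by
    funext ν
    have h1 : ∀ n : ℕ, ENNReal.ofReal (seF r n ν)
        = ∫⁻ x, ENNReal.ofReal (seU r n ν x) ∂(ν : Measure X) := fun n =>
      ofReal_integral_eq_lintegral_ofReal ((seUB r n ν).integrable _)
        (Eventually.of_forall (seU_nonneg r n ν))
    have hmeas : ∀ n : ℕ, Measurable fun x => ENNReal.ofReal (seU r n ν x) := fun n =>
      ((seU_continuous_x r n ν).measurable).ennreal_ofReal
    have hmono : Monotone fun (n : ℕ) (x : X) => ENNReal.ofReal (seU r n ν x) :=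
      fun m n h x => ENNReal.ofReal_le_ofReal (seU_mono h r ν x)
    have h3 : ∀ᵐ x ∂(ν : Measure X),
        ENNReal.ofReal (-Real.log ((ν (Metric.closedBall x r) : NNReal) : ℝ))
          = ⨆ n : ℕ, ENNReal.ofReal (seU r n ν x) := by
      filter_upwards [se_ae_pos r hr ν] with x hx
      set c : ℝ := ((ν : Measure X) (closedBall x r)).toReal with hc
      have hcpos : 0 < c := ENNReal.toReal_pos hx (measure_ne_top _ _)
      have hcoe : ((ν (Metric.closedBall x r) : NNReal) : ℝ) = c := rfl
      have h5 : Tendsto (fun n : ℕ => Real.exp (-(n : ℝ))) atTop (𝓝 0) :=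
        Real.tendsto_exp_neg_atTop_nhds_zero.comp tendsto_natCast_atTop_atTop
      have hmaxt : Tendsto (fun n : ℕ => max (sePsi r n ν x) (Real.exp (-(n : ℝ))))
          atTop (𝓝 c) := by
        have := (sePsi_tendsto r ν x).max h5
        rwa [max_eq_left hcpos.le] at this
      have hU : Tendsto (fun n : ℕ => seU r n ν x) atTop (𝓝 (-Real.log c)) := by
        unfold seU
        exact ((Real.continuousAt_log hcpos.ne').tendsto.comp hmaxt).neg
      have hU' : Tendsto (fun n : ℕ => ENNReal.ofReal (seU r n ν x)) atTop
          (𝓝 (ENNReal.ofReal (-Real.log c))) :=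
        (ENNReal.continuous_ofReal.tendsto _).comp hU
      have hmono' : Monotone fun n : ℕ => ENNReal.ofReal (seU r n ν x) :=
        fun m n h => ENNReal.ofReal_le_ofReal (seU_mono h r ν x)
      rw [hcoe]
      exact tendsto_nhds_unique hU' (tendsto_atTop_iSup hmono')
    calc ∫⁻ x, ENNReal.ofReal (-Real.log ((ν (Metric.closedBall x r) : NNReal) : ℝ))
          ∂(ν : Measure X)
        = ∫⁻ x, ⨆ n : ℕ, ENNReal.ofReal (seU r n ν x) ∂(ν : Measure X) :=
          lintegral_congr_ae h3
      _ = ⨆ n : ℕ, ∫⁻ x, ENNReal.ofReal (seU r n ν x) ∂(ν : Measure X) :=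
          lintegral_iSup hmeas hmono
      _ = ⨆ n : ℕ, ENNReal.ofReal (seF r n ν) := by simp_rw [h1]
  rw [key]
  exact lowerSemicontinuous_iSup fun n =>
    (ENNReal.continuous_ofReal.comp (seF_continuous r n)).lowerSemicontinuous
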